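/- arXiv:2501.10584 — 4 statements merged into one kernel-verified Lean document; each statement's English description precedes it below -/
import Mathlib

section
/- Let 0 < ρ ≤ 1 and, for ī, j̄ ∈ {1,2,3}^ℕ, define F¹_{ī,j̄}(b) = b·Π_b(ī) + ((1+b)/2)·Π_b(j̄) − 1, where Π_b is the natural projection of Φ_b = {((1+b)/2)x − 1, −b·x, ((1+b)/2)x + 1}. If (i₁, j₁) ≠ (1,3), then F¹_{ī,j̄} is not identically zero on (−ρ, ρ). -/
open Set Filter

/-- The maps of the conjugated Okamoto IFS `Φ_b`, with digit `0 ↦ φ₁`, `1 ↦ φ₂`, `2 ↦ φ₃`. -/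
noncomputable def phiMap (b : ℝ) : Fin 3 → ℝ → ℝ
  | 0 => fun x => (1 + b) / 2 * x - 1
  | 1 => fun x => -b * x
  | 2 => fun x => (1 + b) / 2 * x + 1

/-- `phiOrbit b ī n = φ_{i₁} ∘ ⋯ ∘ φ_{i_n} (0)`. -/
noncomputable def phiOrbit (b : ℝ) : (ℕ → Fin 3) → ℕ → ℝ
  | _, 0 => 0
  | i, n + 1 => phiMap b (i 0) (phiOrbit b (fun k => i (k + 1)) n)

lemma phiMap_cont (b : ℝ) (d : Fin 3) : Continuous (phiMap b d) := by
  fin_cases d <;> simp only [phiMap] <;> continuity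
lemma fin3_cases (d : Fin 3) : d = 0 ∨ d = 1 ∨ d = 2 := by omega
lemma orbit_bound (b : ℝ) (hb0 : 0 ≤ b) (hb1 : b < 1) :
    ∀ (n : ℕ) (i : ℕ → Fin 3), |phiOrbit b i n| ≤ 2 / (1 - b) := by
  have h1 : 0 < 1 - b := by linarith
  have hM : (2 / (1 - b)) * (1 - b) = 2 := by field_simp
  intro n
  induction n with
  | zero => intro i; simp [phiOrbit]; positivity
  | succ n ih =>
    intro i
    have hx := ih (fun k => i (k + 1))
    rw [abs_le] at hx
    have hrw : phiOrbit b i (n + 1)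
        = phiMap b (i 0) (phiOrbit b (fun k => i (k + 1)) n) := rfl
    set x := phiOrbit b (fun k => i (k + 1)) n with hxdef
    rcases fin3_cases (i 0) with h | h | h <;>
      rw [hrw, h] <;> simp only [phiMap] <;> rw [abs_le] <;> constructor <;>
      nlinarith [hx.1, hx.2, mul_pos h1 h1]

theorem F1_not_identically_zero (ρ : ℝ) (hρ : 0 < ρ) (hρ1 : ρ ≤ 1)
    (proj : ℝ → (ℕ → Fin 3) → ℝ)
    (hproj : ∀ b ∈ Ioo (-ρ) ρ, ∀ i : ℕ → Fin 3,
      Tendsto (phiOrbit b i) atTop (nhds (proj b i)))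
    (i j : ℕ → Fin 3) (hij : (i 0, j 0) ≠ ((0 : Fin 3), (2 : Fin 3))) :
    ∃ b ∈ Ioo (-ρ) ρ,
      b * proj b i + (1 + b) / 2 * proj b j - 1 ≠ 0 := by
  -- self-similarity of proj
  have hshift : ∀ b ∈ Ioo (-ρ) ρ, ∀ i : ℕ → Fin 3,
      proj b i = phiMap b (i 0) (proj b (fun k => i (k + 1))) := by
    intro b hb i
    have h1 := hproj b hb i
    have h2 := hproj b hb (fun k => i (k + 1))
    have h3 : Tendsto (fun n => phiOrbit b i (n + 1)) atTop (nhds (proj b i)) :=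
      h1.comp (tendsto_add_atTop_nat 1)
    have h4 : Tendsto (fun n => phiMap b (i 0) (phiOrbit b (fun k => i (k + 1)) n)) atTop
        (nhds (phiMap b (i 0) (proj b fun k => i (k + 1)))) :=
      ((phiMap_cont b (i 0)).tendsto _).comp h2
    exact tendsto_nhds_unique h3 h4
  -- bound on proj
  have hpb : ∀ b ∈ Ioo (-ρ) ρ, 0 ≤ b → ∀ i : ℕ → Fin 3, |proj b i| ≤ 2 / (1 - b) := by
    intro b hb hb0 i
    have hb1 : b < 1 := lt_of_lt_of_le hb.2 hρ1
    exact le_of_tendsto (hproj b hb i).abs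
      (Filter.Eventually.of_forall fun n => orbit_bound b hb0 hb1 n i)
  have h0mem : (0 : ℝ) ∈ Ioo (-ρ) ρ := ⟨by linarith, hρ⟩
  by_cases hall : ∀ n, j n = 2
  · -- j = 2,2,2,… ; use b = ρ/2
    set b := ρ / 2 with hbdef
    have hbmem : b ∈ Ioo (-ρ) ρ := ⟨by simp only [hbdef]; linarith, by simp only [hbdef]; linarith⟩
    have hb0 : 0 < b := by simp only [hbdef]; linarith
    have hb1 : b < 1 := lt_of_lt_of_le hbmem.2 hρ1
    have hnb : 0 < 1 - b := by linarith
    have hM : (2 / (1 - b)) * (1 - b) = 2 := by field_simp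
    -- proj b j is the fixed point 2/(1-b)
    have hjsh : (fun k => j (k + 1)) = j := funext fun k => by rw [hall, hall]
    have hjfp : proj b j = (1 + b) / 2 * proj b j + 1 := by
      have := hshift b hbmem j
      rw [hjsh, hall 0] at this
      simpa only [phiMap] using this
    have hPj : proj b j = 2 / (1 - b) := by
      have : proj b j * (1 - b) = 2 := by linarith
      field_simp
      linarith
    -- i 0 ≠ 0
    have hi0 : i 0 ≠ 0 := fun h => hij (by rw [h, hall 0])
    -- Π_b(i) > -2/(1-b)
    have hbx := hpb b hbmem hb0.le (fun k => i (k + 1))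
    rw [abs_le] at hbx
    have hPi : proj b i > -(2 / (1 - b)) := by
      have hsh := hshift b hbmem i
      rcases fin3_cases (i 0) with h | h | h
      · exact absurd h hi0
      · rw [h] at hsh; simp only [phiMap] at hsh
        nlinarith [hbx.1, hbx.2, mul_pos hnb hnb]
      · rw [h] at hsh; simp only [phiMap] at hsh
        nlinarith [hbx.1, hbx.2, mul_pos hnb hnb]
    refine ⟨b, hbmem, fun hzero => ?_⟩
    rw [hPj] at hzero
    nlinarith [mul_pos hnb hnb, mul_pos hb0 hnb]
  · -- some digit of j is not 2; use b = 0
    push_neg at hall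
    obtain ⟨n, hn⟩ := hall
    -- strict bound at b = 0
    have hstrict : ∀ (n : ℕ) (j : ℕ → Fin 3), j n ≠ 2 → proj 0 j < 2 := by
      intro n
      induction n with
      | zero =>
        intro j hj
        have hsh := hshift 0 h0mem j
        have hb := hpb 0 h0mem le_rfl (fun k => j (k + 1))
        rw [abs_le] at hb
        norm_num at hb
        rcases fin3_cases (j 0) with h | h | h
        · rw [h] at hsh; simp only [phiMap] at hsh; rw [hsh]; linarith [hb.2]
        · rw [h] at hsh; simp only [phiMap] at hsh; rw [hsh]; norm_num
        · exact absurd h hj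
      | succ n ih =>
        intro j hj
        have hsh := hshift 0 h0mem j
        have hb := hpb 0 h0mem le_rfl (fun k => j (k + 1))
        rw [abs_le] at hb
        norm_num at hb
        rcases fin3_cases (j 0) with h | h | h
        · rw [h] at hsh; simp only [phiMap] at hsh; rw [hsh]; linarith [hb.2]
        · rw [h] at hsh; simp only [phiMap] at hsh; rw [hsh]; norm_num
        · rw [h] at hsh; simp only [phiMap] at hsh; rw [hsh]
          have := ih (fun k => j (k + 1)) hj
          norm_num
          linarith
    have hlt := hstrict n j hn
    refine ⟨0, h0mem, fun hzero => ?_⟩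
    norm_num at hzero
    linarith
end

section
/- Let b ∈ (0,1), s defined by (2b+1)·(1/3)^{s−1} = 1, and probabilities p₁ = p₃ = ((b+1)/2)·(1/3)^{s−1}, p₂ = b·(1/3)^{s−1} with ratios r₁ = r₃ = (b+1)/2, r₂ = b. For q > 1 let τ(q) be the unique real number with 2·p₁^q·r₁^{−τ(q)} + p₂^q·r₂^{−τ(q)} = 1. Then τ(q) > q − 1 for every q > 1. -/
open Set Real

lemma aux_pow_collapse (r c q : ℝ) (hr : 0 < r) (hc : 0 ≤ c) :
    (r * c) ^ q * r ^ (-(q-1)) = r * c ^ q := by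
  rw [Real.mul_rpow hr.le hc, mul_right_comm, ← Real.rpow_add hr]
  have : q + -(q-1) = 1 := by ring
  rw [this, Real.rpow_one]

theorem tau_gt_q_sub_one (b : ℝ) (hb : b ∈ Ioo (0:ℝ) 1)
    (s : ℝ) (hs : (2 * b + 1) * ((1:ℝ)/3) ^ (s - 1) = 1)
    (p₁ p₂ r₁ r₂ : ℝ)
    (hp₁ : p₁ = (b + 1) / 2 * ((1:ℝ)/3) ^ (s - 1))
    (hp₂ : p₂ = b * ((1:ℝ)/3) ^ (s - 1))
    (hr₁ : r₁ = (b + 1) / 2) (hr₂ : r₂ = b)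
    (q τ : ℝ) (hq : 1 < q)
    (hτ : 2 * p₁ ^ q * r₁ ^ (-τ) + p₂ ^ q * r₂ ^ (-τ) = 1) :
    τ > q - 1 := by
  obtain ⟨hb0, hb1⟩ := hb
  rw [hp₁, hp₂, hr₁, hr₂] at hτ
  set c : ℝ := ((1:ℝ)/3) ^ (s - 1) with hc
  have hc0 : (0:ℝ) < c := Real.rpow_pos_of_pos (by norm_num) _
  have hc1 : c < 1 := by nlinarith
  have hr10 : (0:ℝ) < (b + 1) / 2 := by linarith
  have hr11 : (b + 1) / 2 < 1 := by linarith
  have hp1pos : (0:ℝ) < ((b + 1) / 2 * c) ^ q :=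
    Real.rpow_pos_of_pos (by positivity) _
  have hp2pos : (0:ℝ) < (b * c) ^ q :=
    Real.rpow_pos_of_pos (by positivity) _
  by_contra h
  push_neg at h
  -- monotonicity: r^{-τ} ≤ r^{-(q-1)} for 0 < r < 1
  have hm1 : ((b + 1) / 2) ^ (-τ) ≤ ((b + 1) / 2) ^ (-(q-1)) :=
    (Real.rpow_le_rpow_left_iff_of_base_lt_one hr10 hr11).mpr (by linarith)
  have hm2 : b ^ (-τ) ≤ b ^ (-(q-1)) :=
    (Real.rpow_le_rpow_left_iff_of_base_lt_one hb0 hb1).mpr (by linarith)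
  have key1 := aux_pow_collapse ((b + 1) / 2) c q hr10 hc0.le
  have key2 := aux_pow_collapse b c q hb0 hc0.le
  have hsum : 2 * ((b + 1) / 2 * c) ^ q * ((b + 1) / 2) ^ (-(q-1))
      + (b * c) ^ q * b ^ (-(q-1)) = (2 * b + 1) * c ^ q := by
    rw [mul_assoc, key1, key2]; ring
  have hcq : (2 * b + 1) * c ^ q = c ^ (q - 1) := by
    have : c ^ q = c * c ^ (q - 1) := by
      rw [show q = 1 + (q-1) by ring, Real.rpow_add hc0, Real.rpow_one]
      ring_nf
    rw [this, ← mul_assoc, hs, one_mul]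
  have hlt : c ^ (q - 1) < 1 :=
    Real.rpow_lt_one hc0.le hc1 (by linarith)
  nlinarith [mul_le_mul_of_nonneg_left hm1 hp1pos.le,
    mul_le_mul_of_nonneg_left hm2 hp2pos.le]
end

section
/- Let a ∈ (1/2,1), p = (2a−1)/(4a−1). Then the ratio [−p·log p − (1−p)·log((1−p)/2)] / [−p·log(2a−1) − (1−p)·log a] is strictly greater than 1. -/
open Set Real

theorem entropy_lyapunov_ratio_gt_one (a : ℝ) (ha : a ∈ Ioo (1/2 : ℝ) 1)
    (p : ℝ) (hp : p = (2 * a - 1) / (4 * a - 1)) :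
    1 < (-p * Real.log p - (1 - p) * Real.log ((1 - p) / 2)) /
        (-p * Real.log (2 * a - 1) - (1 - p) * Real.log a) := by
  obtain ⟨ha1, ha2⟩ := ha
  have h1 : 0 < 2 * a - 1 := by linarith
  have h1' : 2 * a - 1 < 1 := by linarith
  have h2 : 1 < 4 * a - 1 := by linarith
  have h4 : 0 < 4 * a - 1 := by linarith
  have ha0 : 0 < a := by linarith
  have hppos : 0 < p := by rw [hp]; positivity
  have hq : 1 - p = 2 * a / (4 * a - 1) := by
    rw [hp, eq_div_iff h4.ne', sub_mul, div_mul_cancel₀ _ h4.ne']; ring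
  have hqpos : 0 < 1 - p := by rw [hq]; positivity
  have hlogp : Real.log p = Real.log (2 * a - 1) - Real.log (4 * a - 1) := by
    rw [hp, Real.log_div (by linarith) (by linarith)]
  have hhalf : (1 - p) / 2 = a / (4 * a - 1) := by
    rw [hq]; ring
  have hlogq : Real.log ((1 - p) / 2) = Real.log a - Real.log (4 * a - 1) := by
    rw [hhalf, Real.log_div (by linarith) (by linarith)]
  have hD : 0 < -p * Real.log (2 * a - 1) - (1 - p) * Real.log a := by
    have l1 : Real.log (2 * a - 1) < 0 := Real.log_neg h1 h1'
    have l2 : Real.log a < 0 := Real.log_neg ha0 ha2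
    nlinarith [mul_pos hppos (neg_pos.mpr l1), mul_pos hqpos (neg_pos.mpr l2)]
  rw [lt_div_iff₀ hD, one_mul, hlogp, hlogq]
  have hlog4 : 0 < Real.log (4 * a - 1) := Real.log_pos h2
  nlinarith [hlog4]
end

section
/- Let E ⊆ ℝ be compact, let L ⊆ ℝ be bounded, and suppose there is a sequence of similarities T_k(x) = (x − x_k)/r_k with 0 < c₁ ≤ |r_k| ≤ c₂ < ∞ for all k such that T_k(L) ∩ B(0,1) converges to E in the Hausdorff metric. Then there exists a similarity T : ℝ → ℝ with T(E) ⊆ closure(L); in particular dim_H E ≤ dim_H closure(L). -/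
open Set Filter Metric

set_option maxHeartbeats 1000000 in
theorem weak_tangent_bounded_scaling
    (E L : Set ℝ) (hE : IsCompact E) (hEne : E.Nonempty) (hL : Bornology.IsBounded L)
    (x r : ℕ → ℝ) (c₁ c₂ : ℝ) (hc₁ : 0 < c₁)
    (hr : ∀ k, c₁ ≤ |r k| ∧ |r k| ≤ c₂)
    (hconv : Tendsto
      (fun k => EMetric.hausdorffEdist
        ((fun z => (z - x k) / r k) '' L ∩ closedBall (0:ℝ) 1) E)
      atTop (nhds 0)) :
    (∃ ρ t : ℝ, ρ ≠ 0 ∧ (fun z => ρ * z + t) '' E ⊆ closure L) ∧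
      dimH E ≤ dimH (closure L) := by
  set A : ℕ → Set ℝ := fun k => (fun z => (z - x k) / r k) '' L ∩ closedBall (0:ℝ) 1 with hA
  have hrne : ∀ k, r k ≠ 0 := by
    intro k h
    have := (hr k).1
    rw [h, abs_zero] at this
    linarith
  have hc₂ : 0 < c₂ := lt_of_lt_of_le hc₁ ((hr 0).1.trans (hr 0).2)
  obtain ⟨e0, he0⟩ := hEne
  obtain ⟨M, hM⟩ := hL.subset_closedBall 0
  -- eventually the sets A k are nonempty
  have hev : ∀ᶠ k in atTop, (A k).Nonempty := by
    filter_upwards [hconv.eventually_lt_const zero_lt_one] with k hk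
    have hk' : EMetric.hausdorffEdist E (A k) < 1 := by
      exact EMetric.hausdorffEdist_comm.trans_lt hk
    obtain ⟨b, hb, -⟩ := EMetric.exists_edist_lt_of_hausdorffEdist_lt he0 hk'
    exact ⟨b, hb⟩
  -- eventually x is bounded
  have hbd : ∀ᶠ k in atTop, |x k| ≤ M + c₂ := by
    filter_upwards [hev] with k hk
    obtain ⟨y, ⟨w, hwL, hwy⟩, hyb⟩ := hk
    have hw : w - x k = y * r k := (div_eq_iff (hrne k)).1 hwy
    have hwM : |w| ≤ M := by
      have := hM hwL
      rwa [mem_closedBall, Real.dist_eq, sub_zero] at this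
    have hy1 : |y| ≤ 1 := by
      rw [mem_closedBall, Real.dist_eq, sub_zero] at hyb
      exact hyb
    have : |x k| ≤ |w| + |y| * |r k| := by
      have : x k = w - y * r k := by linarith
      rw [this]
      calc |w - y * r k| ≤ |w| + |y * r k| := abs_sub _ _
        _ = |w| + |y| * |r k| := by rw [abs_mul]
    have hy2 : |y| * |r k| ≤ 1 * c₂ :=
      mul_le_mul hy1 (hr k).2 (abs_nonneg _) zero_le_one
    nlinarith
  obtain ⟨N, hN⟩ := eventually_atTop.1 hbd
  -- extract convergent subsequences
  obtain ⟨ρ, -, φ, hφ, hρ⟩ :=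
    (isCompact_closedBall (0:ℝ) c₂).tendsto_subseq (x := fun k => r (k + N))
      (fun k => by
        rw [mem_closedBall, Real.dist_eq, sub_zero]
        exact (hr _).2.trans (le_abs_self _) |>.trans (le_of_eq (abs_of_nonneg hc₂.le)) |>.trans le_rfl)
  obtain ⟨t, -, ψ, hψ, ht⟩ :=
    (isCompact_closedBall (0:ℝ) (M + c₂)).tendsto_subseq (x := fun j => x (φ j + N))
      (fun j => by
        rw [mem_closedBall, Real.dist_eq, sub_zero]
        exact hN _ (Nat.le_add_left _ _))
  set σ : ℕ → ℕ := fun j => φ (ψ j) + N with hσ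
  have hσat : Tendsto σ atTop atTop :=
    tendsto_atTop_mono (fun j => Nat.le_add_right _ _) (hφ.comp hψ).tendsto_atTop
  have hσr : Tendsto (fun j => r (σ j)) atTop (nhds ρ) := hρ.comp hψ.tendsto_atTop
  have hσx : Tendsto (fun j => x (σ j)) atTop (nhds t) := ht
  have hσε : Tendsto (fun j => EMetric.hausdorffEdist (A (σ j)) E) atTop (nhds 0) :=
    hconv.comp hσat
  have hρabs : c₁ ≤ |ρ| := ge_of_tendsto' hσr.abs (fun j => (hr (σ j)).1)
  have hρne : ρ ≠ 0 := by
    intro h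
    rw [h, abs_zero] at hρabs
    linarith
  -- main inclusion
  have hsub : (fun z => ρ * z + t) '' E ⊆ closure L := by
    rintro _ ⟨e, he, rfl⟩
    rw [Metric.mem_closure_iff]
    intro δ hδ
    have hδ3 : 0 < δ / 3 := by linarith
    have h1 : ∀ᶠ j in atTop,
        EMetric.hausdorffEdist (A (σ j)) E < ENNReal.ofReal (δ / 3 / c₂) :=
      hσε.eventually_lt_const (ENNReal.ofReal_pos.2 (by positivity))
    have h2 : ∀ᶠ j in atTop, dist (r (σ j)) ρ < δ / 3 / (|e| + 1) :=
      Metric.tendsto_nhds.1 hσr _ (by positivity)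
    have h3 : ∀ᶠ j in atTop, dist (x (σ j)) t < δ / 3 :=
      Metric.tendsto_nhds.1 hσx _ hδ3
    obtain ⟨j, hj1, hj2, hj3⟩ := (h1.and (h2.and h3)).exists
    have hE' : EMetric.hausdorffEdist E (A (σ j)) < ENNReal.ofReal (δ / 3 / c₂) := by
      exact EMetric.hausdorffEdist_comm.trans_lt hj1
    obtain ⟨y, hyA, hy⟩ := EMetric.exists_edist_lt_of_hausdorffEdist_lt he hE'
    rw [edist_lt_ofReal] at hy
    obtain ⟨⟨w, hwL, hwy⟩, -⟩ := hyA
    refine ⟨w, hwL, ?_⟩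
    have hw : w - x (σ j) = y * r (σ j) := (div_eq_iff (hrne _)).1 hwy
    set a := r (σ j)
    set b := x (σ j)
    have hey : |e - y| < δ / 3 / c₂ := by rwa [Real.dist_eq] at hy
    have haρ : |a - ρ| < δ / 3 / (|e| + 1) := by rwa [Real.dist_eq] at hj2
    have hbt : |b - t| < δ / 3 := by rwa [Real.dist_eq] at hj3
    have hac : |a| ≤ c₂ := (hr _).2
    have key : |ρ * e + t - w| < δ := by
      have hdecomp : ρ * e + t - w = (ρ - a) * e + (a * (e - y) + (t - b)) := by
        have : w = y * a + b := by linarith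
        rw [this]; ring
      have hb1 : |(ρ - a) * e| ≤ δ / 3 := by
        rw [abs_mul, abs_sub_comm]
        have h0 : 0 ≤ |e| := abs_nonneg e
        have h1 : |a - ρ| * |e| ≤ (δ / 3 / (|e| + 1)) * |e| :=
          mul_le_mul_of_nonneg_right haρ.le h0
        have h2 : (δ / 3 / (|e| + 1)) * |e| ≤ δ / 3 := by
          rw [div_mul_eq_mul_div, div_le_iff₀ (by positivity)]
          nlinarith
        linarith
      have hb2 : |a * (e - y)| ≤ δ / 3 := by
        rw [abs_mul]
        have : |a| * |e - y| ≤ c₂ * (δ / 3 / c₂) :=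
          mul_le_mul hac hey.le (abs_nonneg _) hc₂.le
        rw [mul_div_cancel₀ _ hc₂.ne'] at this
        linarith
      have hb3 : |t - b| < δ / 3 := by rwa [abs_sub_comm]
      calc |ρ * e + t - w| = |(ρ - a) * e + (a * (e - y) + (t - b))| := by rw [hdecomp]
        _ ≤ |(ρ - a) * e| + |a * (e - y) + (t - b)| := abs_add_le _ _
        _ ≤ |(ρ - a) * e| + (|a * (e - y)| + |t - b|) := by
            have := abs_add_le (a * (e - y)) (t - b); linarith
        _ < δ := by linarith
    rwa [Real.dist_eq]
  -- Hausdorff dimension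
  have hlip : LipschitzWith (Real.nnabs ρ⁻¹) (fun w => ρ⁻¹ * (w - t)) := by
    refine LipschitzWith.of_dist_le_mul fun p q => ?_
    rw [Real.dist_eq, Real.dist_eq, Real.coe_nnabs, ← abs_mul]
    refine le_of_eq ?_
    congr 1
    ring
  have him : (fun w => ρ⁻¹ * (w - t)) '' ((fun z => ρ * z + t) '' E) = E := by
    rw [← image_comp]
    have hid : ((fun w => ρ⁻¹ * (w - t)) ∘ fun z => ρ * z + t) = id := by
      funext z
      simp only [Function.comp_apply, id_eq, add_sub_cancel_right]
      field_simp
    rw [hid, image_id]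
  have hdim : dimH E ≤ dimH ((fun z => ρ * z + t) '' E) := by
    calc dimH E = dimH ((fun w => ρ⁻¹ * (w - t)) '' ((fun z => ρ * z + t) '' E)) := by rw [him]
      _ ≤ dimH ((fun z => ρ * z + t) '' E) := hlip.dimH_image_le _
  exact ⟨⟨ρ, t, hρne, hsub⟩, hdim.trans (dimH_mono hsub)⟩
end
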